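/- Let q be real with 0 < q < 1 and define A_n[s_1,…,s_m] = ∑_{n ≥ k_1 ≥ ⋯ ≥ k_m ≥ 1} (-1)^{k_1+1} q^{k_1(k_1+1)/2} C_q(n,k_1) ∏_{j=1}^m q^{(s_j-1)k_j}[k_j]_q^{-s_j}. Then for all positive integers n, m (m ≥ 2) and positive integers s_2,…,s_m: A_n[0, s_2, s_3, …, s_m] = [n]_q^{-1} A_n[s_2 - 1, s_3, …, s_m]. -/

import Mathlib

open Finset


/-- Gaussian binomial coefficient, vanishing unless `k ≤ n`. -/
noncomputable def qbinom (q : ℝ) (n k : ℕ) : ℝ :=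
  if k ≤ n then ∏ j ∈ Finset.Icc 1 k, (1 - q ^ (n - k + j)) / (1 - q ^ j) else 0

/-- The `q`-analog of a natural number: `[k]_q = (1-q^k)/(1-q)`. -/
noncomputable def qnum (q : ℝ) (k : ℕ) : ℝ := (1 - q ^ k) / (1 - q)

lemma one_sub_qpow_pos {q : ℝ} (hq0 : 0 < q) (hq1 : q < 1) {k : ℕ} (hk : 1 ≤ k) :
    0 < 1 - q ^ k := by
  have : q ^ k < 1 := pow_lt_one₀ hq0.le hq1 (by omega)
  linarith

lemma qnum_pos {q : ℝ} (hq0 : 0 < q) (hq1 : q < 1) {k : ℕ} (hk : 1 ≤ k) :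
    0 < qnum q k :=
  div_pos (one_sub_qpow_pos hq0 hq1 hk) (by linarith)

lemma qbinom_eq {q : ℝ} (n k : ℕ) (hk : k ≤ n) :
    qbinom q n k = (∏ i ∈ Icc (n - k + 1) n, (1 - q ^ i)) / ∏ i ∈ Icc 1 k, (1 - q ^ i) := by
  rw [qbinom, if_pos hk, prod_div_distrib]
  congr 1
  have h : Icc (n - k + 1) n = (Icc 1 k).map (addLeftEmbedding (n - k)) := by
    rw [Finset.map_add_left_Icc]
    congr 1
    omega
  rw [h, prod_map]
  simp [addLeftEmbedding_apply]

lemma icc_prod_ne {q : ℝ} (hq0 : 0 < q) (hq1 : q < 1) (a b : ℕ) (ha : 1 ≤ a) :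
    (∏ i ∈ Icc a b, (1 - q ^ i)) ≠ 0 := by
  apply prod_ne_zero_iff.mpr
  intro i hi
  simp only [mem_Icc] at hi
  exact ne_of_gt (one_sub_qpow_pos hq0 hq1 (le_trans ha hi.1))

lemma qbinom_self {q : ℝ} (hq0 : 0 < q) (hq1 : q < 1) (n : ℕ) :
    qbinom q n n = 1 := by
  rw [qbinom_eq n n le_rfl]
  have : n - n + 1 = 1 := by omega
  rw [this]
  exact div_self (icc_prod_ne hq0 hq1 1 n le_rfl)

lemma qbinom_succ {q : ℝ} (hq0 : 0 < q) (hq1 : q < 1) {n k : ℕ} (h : k < n) :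
    qbinom q n (k + 1) = qbinom q n k * (1 - q ^ (n - k)) / (1 - q ^ (k + 1)) := by
  rw [qbinom_eq n k h.le, qbinom_eq n (k + 1) h]
  have h1 : Icc (n - (k + 1) + 1) n = insert (n - k) (Icc (n - k + 1) n) := by
    have e1 : n - (k + 1) + 1 = n - k := by omega
    rw [e1, show Icc (n - k + 1) n = Ioc (n - k) n from Finset.Icc_add_one_left_eq_Ioc _ _,
      Finset.Ioc_insert_left (by omega)]
  have h2 : ∏ i ∈ Icc 1 (k + 1), (1 - q ^ i) = (∏ i ∈ Icc 1 k, (1 - q ^ i)) * (1 - q ^ (k + 1)) := by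
    rw [← Finset.prod_Icc_succ_top (by omega)]
  rw [h1, prod_insert (by simp), h2]
  have d1 := icc_prod_ne hq0 hq1 1 k le_rfl
  have d2 : (1 - q ^ (k + 1)) ≠ 0 := ne_of_gt (one_sub_qpow_pos hq0 hq1 (by omega))
  field_simp

lemma tri (k : ℕ) (hk : 1 ≤ k) : k * (k + 1) / 2 = k * (k - 1) / 2 + k := by
  obtain ⟨m, rfl⟩ : ∃ m, k = m + 1 := ⟨k - 1, by omega⟩
  simp only [Nat.add_sub_cancel]
  rw [show (m + 1) * (m + 1 + 1) = (m + 1) * m + 2 * (m + 1) from by ring,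
    Nat.add_mul_div_left _ _ two_pos]

lemma step {q : ℝ} (hq0 : 0 < q) (hq1 : q < 1) {n j : ℕ} (h1 : 1 ≤ j) (hjn : j < n) :
    (-1 : ℝ) ^ (j + 1) * q ^ (j * (j - 1) / 2) * qbinom q n j
      + (-1 : ℝ) ^ (j + 1 + 1) * q ^ ((j + 1) * (j + 1 - 1) / 2) * qbinom q n (j + 1)
          * qnum q (j + 1) / qnum q n
    = (-1 : ℝ) ^ (j + 1) * q ^ (j * (j - 1) / 2) * qbinom q n j * qnum q j / qnum q n := by
  have hexp : (j + 1) * (j + 1 - 1) / 2 = j * (j - 1) / 2 + j := by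
    have := tri j h1
    simpa [Nat.mul_comm] using this
  obtain ⟨d, rfl⟩ : ∃ d, n = j + d := ⟨n - j, by omega⟩
  have hd1 : 1 ≤ d := by omega
  have hnd : j + d - j = d := by omega
  rw [qbinom_succ hq0 hq1 hjn, hnd, hexp, pow_add]
  have e1 : (1 : ℝ) - q ≠ 0 := by linarith
  have e2 : (1 : ℝ) - q ^ (j + 1) ≠ 0 := ne_of_gt (one_sub_qpow_pos hq0 hq1 (by omega))
  have e3 : (1 : ℝ) - q ^ (j + d) ≠ 0 := ne_of_gt (one_sub_qpow_pos hq0 hq1 (by omega))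
  have e4 : (1 : ℝ) - q ^ d ≠ 0 := ne_of_gt (one_sub_qpow_pos hq0 hq1 hd1)
  have e5 : (1 : ℝ) - q ^ j ≠ 0 := ne_of_gt (one_sub_qpow_pos hq0 hq1 h1)
  simp only [qnum]
  field_simp
  ring

lemma tail_sum {q : ℝ} (hq0 : 0 < q) (hq1 : q < 1) {n : ℕ} (hn : 0 < n) (d : ℕ) :
    d < n →
    ∑ k ∈ Icc (n - d) n, (-1 : ℝ) ^ (k + 1) * q ^ (k * (k - 1) / 2) * qbinom q n k
      = (-1 : ℝ) ^ (n - d + 1) * q ^ ((n - d) * (n - d - 1) / 2) * qbinom q n (n - d)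
          * qnum q (n - d) / qnum q n := by
  induction d with
  | zero =>
    intro _
    simp only [Nat.sub_zero, Finset.Icc_self, Finset.sum_singleton, qbinom_self hq0 hq1]
    rw [mul_div_assoc, div_self (ne_of_gt (qnum_pos hq0 hq1 hn))]
    ring
  | succ d ih =>
    intro h
    have hd : d < n := by omega
    have hsplit : n - d = n - (d + 1) + 1 := by omega
    have hins : Icc (n - (d + 1)) n = insert (n - (d + 1)) (Icc (n - d) n) := by
      rw [hsplit, show Icc (n - (d + 1) + 1) n = Ioc (n - (d + 1)) n from Finset.Icc_add_one_left_eq_Ioc _ _,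
        Finset.Ioc_insert_left (by omega)]
    rw [hins, Finset.sum_insert (by simp only [mem_Icc]; omega), ih hd]
    set j := n - (d + 1) with hj
    have h1 : 1 ≤ j := by omega
    have hjn : j < n := by omega
    rw [show n - d = j + 1 from by omega]
    exact step hq0 hq1 h1 hjn

/-- `Zn q n [s₁,…,s_m] = ∑_{n ≥ k₁ ≥ ⋯ ≥ k_m ≥ 1} ∏_j q^{k_j} [k_j]_q^{-s_j}`. -/
noncomputable def Zn (q : ℝ) : ℕ → List ℕ → ℝ
  | _, [] => 1
  | n, s :: t => ∑ k ∈ Finset.Icc 1 n, q ^ k / (qnum q k) ^ s * Zn q k t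

/-- `Wn q n [s₁,…,s_m] = ∑_{n ≥ k₁ ≥ ⋯ ≥ k_m ≥ 1} ∏_j q^{(s_j-1) k_j} [k_j]_q^{-s_j}`. -/
noncomputable def Wn (q : ℝ) : ℕ → List ℕ → ℝ
  | _, [] => 1
  | n, s :: t => ∑ k ∈ Finset.Icc 1 n,
      q ^ (((s : ℤ) - 1) * (k : ℤ)) / (qnum q k) ^ s * Wn q k t

/-- `An q n [s₁,…,s_m] = ∑_{n ≥ k₁ ≥ ⋯ ≥ k_m ≥ 1} (-1)^{k₁+1} q^{k₁(k₁+1)/2} C_q(n,k₁)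
    ∏_j q^{(s_j-1) k_j} [k_j]_q^{-s_j}`. -/
noncomputable def An (q : ℝ) (n : ℕ) : List ℕ → ℝ
  | [] => 1
  | s :: t => ∑ k ∈ Finset.Icc 1 n,
      (-1 : ℝ) ^ (k + 1) * q ^ (k * (k + 1) / 2) * qbinom q n k *
        (q ^ (((s : ℤ) - 1) * (k : ℤ)) / (qnum q k) ^ s) * Wn q k t

/-- Proposition 2: recurrence for `A_n` with leading exponent `0`. -/
theorem An_zero_recurrence (q : ℝ) (hq0 : 0 < q) (hq1 : q < 1) (n : ℕ) (hn : 0 < n)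
    (s₂ : ℕ) (hs₂ : 0 < s₂) (t : List ℕ) (ht : ∀ s ∈ t, 0 < s) :
    An q n (0 :: s₂ :: t) = (qnum q n)⁻¹ * An q n ((s₂ - 1) :: t) := by
  have hqne : q ≠ 0 := ne_of_gt hq0
  have hqnn : qnum q n ≠ 0 := ne_of_gt (qnum_pos hq0 hq1 hn)
  have L1 : An q n (0 :: s₂ :: t)
      = ∑ k ∈ Icc 1 n, ∑ k₂ ∈ Icc 1 k,
          ((-1 : ℝ) ^ (k + 1) * q ^ (k * (k - 1) / 2) * qbinom q n k) *
            (q ^ (((s₂ : ℤ) - 1) * (k₂ : ℤ)) / qnum q k₂ ^ s₂ * Wn q k₂ t) := by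
    simp only [An, Wn]
    apply Finset.sum_congr rfl
    intro k hk
    simp only [mem_Icc] at hk
    rw [Finset.mul_sum]
    apply Finset.sum_congr rfl
    intro k₂ _
    have hz : q ^ ((((0 : ℕ) : ℤ) - 1) * (k : ℤ)) = (q ^ k)⁻¹ := by
      rw [show (((0 : ℕ) : ℤ) - 1) * (k : ℤ) = -(k : ℤ) from by push_cast; ring,
        zpow_neg, zpow_natCast]
    rw [hz, pow_zero, div_one, tri k hk.1, pow_add]
    have hk0 : q ^ k ≠ 0 := pow_ne_zero _ hqne
    have hcan : q ^ (k * (k - 1) / 2) * q ^ k * (q ^ k)⁻¹ = q ^ (k * (k - 1) / 2) := by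
      rw [mul_assoc, mul_inv_cancel₀ hk0, mul_one]
    linear_combination ((-1 : ℝ) ^ (k + 1) * qbinom q n k *
      (q ^ (((s₂ : ℤ) - 1) * (k₂ : ℤ)) / qnum q k₂ ^ s₂ * Wn q k₂ t)) * hcan
  rw [L1, Finset.sum_comm' (by intro x y; simp only [mem_Icc]; omega :
    ∀ x y, x ∈ Icc 1 n ∧ y ∈ Icc 1 x ↔ x ∈ Icc y n ∧ y ∈ Icc 1 n)]
  simp only [An]
  rw [Finset.mul_sum]
  apply Finset.sum_congr rfl
  intro j hj
  simp only [mem_Icc] at hj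
  rw [← Finset.sum_mul]
  have ht2 := tail_sum hq0 hq1 hn (n - j) (by omega)
  rw [show n - (n - j) = j from by omega] at ht2
  rw [ht2]
  -- per-term algebra
  have hqj : qnum q j ≠ 0 := ne_of_gt (qnum_pos hq0 hq1 hj.1)
  have hc : ((s₂ - 1 : ℕ) : ℤ) = (s₂ : ℤ) - 1 := by omega
  rw [hc, show ((s₂ : ℤ) - 1 - 1) = (s₂ : ℤ) - 2 from by ring]
  rw [show ((s₂ : ℤ) - 1) * (j : ℤ) = ((s₂ : ℤ) - 2) * (j : ℤ) + (j : ℤ) from by ring,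
    zpow_add₀ hqne, zpow_natCast]
  have hpow : qnum q j ^ s₂ = qnum q j ^ (s₂ - 1) * qnum q j := by
    rw [← pow_succ]
    congr 1
    omega
  rw [hpow, tri j hj.1, pow_add]
  have hk0 : q ^ j ≠ 0 := pow_ne_zero _ hqne
  have hp0 : qnum q j ^ (s₂ - 1) ≠ 0 := pow_ne_zero _ hqj
  field_simp
  ring
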